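/- For the 3-dimensional weak Ramsey number: wr_c^3(m) ≤ 2^(m^(6c)) for all m ≥ 1 and c, i.e., every coloring C : [0, 2^(m^(6c))]³ → c of increasing triples admits a C-weakly homogeneous set of size m+1. -/

import Mathlib

/-- `WHCd d C s h`: `h 0 < h 1 < ⋯ < h (s-1)` is weakly homogeneous for the
`d`-dimensional coloring `C`: consecutive `d`-tuples receive equal colors. -/
def WHCd (d : ℕ) (C : (Fin d → ℕ) → ℕ) (s : ℕ) (h : ℕ → ℕ) : Prop :=
  (∀ i, i + 1 < s → h i < h (i + 1)) ∧
  (∀ i, i + d < s → C (fun t => h (i + t)) = C (fun t => h (i + 1 + t)))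


namespace WR3

variable (c : ℕ) (C3 : ℕ → ℕ → ℕ → ℕ)



/-- Length of the longest increasing path of color-`j` edges ending at `x`. -/
def pathLen (D : ℕ → ℕ → ℕ) (j : ℕ) : ℕ → ℕ
  | x => ((Finset.range x).attach.filter (fun y => D y.1 x = j)).sup
      (fun y => pathLen D j y.1 + 1)
  termination_by x => x
  decreasing_by exact Finset.mem_range.mp y.2

lemma pathLen_ge (D : ℕ → ℕ → ℕ) (j x y : ℕ) (hxy : y < x) (hD : D y x = j) :
    pathLen D j y + 1 ≤ pathLen D j x := by
  conv_rhs => rw [pathLen]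
  have hmem : (⟨y, Finset.mem_range.mpr hxy⟩ : {z // z ∈ Finset.range x}) ∈
      (Finset.range x).attach.filter (fun z => D z.1 x = j) := by
    simp [hD]
  exact Finset.le_sup (f := fun z : {z // z ∈ Finset.range x} => pathLen D j z.1 + 1) hmem

lemma pathLen_pred (D : ℕ → ℕ → ℕ) (j x n : ℕ) (h : n + 1 ≤ pathLen D j x) :
    ∃ y, y < x ∧ D y x = j ∧ n ≤ pathLen D j y := by
  rw [pathLen] at h
  by_contra hc
  push_neg at hc
  have hlt : ((Finset.range x).attach.filter (fun y => D y.1 x = j)).sup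
      (fun y => pathLen D j y.1 + 1) < n + 1 := by
    apply Finset.sup_lt_iff (show (⊥ : ℕ) < n + 1 from Nat.succ_pos n) |>.mpr
    rintro ⟨y, hy⟩ hmem
    have hy' := Finset.mem_range.mp hy
    have h2 := hc y hy' (Finset.mem_filter.mp hmem).2
    show pathLen D j y + 1 < n + 1
    omega
  omega

lemma pathLen_chain (D : ℕ → ℕ → ℕ) (j : ℕ) : ∀ n x, n ≤ pathLen D j x →
    ∃ g : ℕ → ℕ, g n = x ∧ (∀ t, t < n → g t < g (t + 1) ∧ D (g t) (g (t + 1)) = j) ∧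
      (∀ t, t ≤ n → g t ≤ x) := by
  intro n
  induction n with
  | zero => intro x _; exact ⟨fun _ => x, rfl, fun t ht => by omega, fun t ht => le_rfl⟩
  | succ n ih =>
    intro x h
    obtain ⟨y, hyx, hD, hy⟩ := pathLen_pred D j x n h
    obtain ⟨g, hgn, hstep, hbd⟩ := ih y hy
    refine ⟨fun t => if t ≤ n then g t else x, by simp, ?_, ?_⟩
    · intro t ht
      by_cases h1 : t + 1 ≤ n
      · simp only [if_pos (by omega : t ≤ n), if_pos h1]
        exact hstep t (by omega)
      · have ht' : t = n := by omega
        subst ht'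
        beta_reduce
        rw [if_pos le_rfl, if_neg (Nat.not_succ_le_self t), hgn]
        exact ⟨hyx, hD⟩
    · intro t ht
      by_cases h1 : t ≤ n
      · beta_reduce; rw [if_pos h1]; exact le_trans (hbd t h1) (le_of_lt hyx)
      · beta_reduce; rw [if_neg h1]

lemma exists_long_path (D : ℕ → ℕ → ℕ) (c m : ℕ) (hc : ∀ x y, D x y < c)
    (hm : 1 ≤ m) : ∃ x, x ≤ m ^ c ∧ ∃ j, m ≤ pathLen D j x := by
  by_contra hcon
  push_neg at hcon
  have hbd : ∀ x, x ≤ m ^ c → ∀ j, pathLen D j x < m := fun x hx j => hcon x hx j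
  set e : ℕ → (Fin c → Fin m) := fun x j => ⟨min (pathLen D j x) (m - 1), by omega⟩ with he
  have hinj : Set.InjOn e (Finset.range (m ^ c + 1)) := by
    intro x hx y hy hxy
    simp only [Finset.coe_range, Set.mem_Iio] at hx hy
    by_contra hne
    rcases Nat.lt_or_ge x y with h | h
    · have hj : D x y < c := hc x y
      have h1 := pathLen_ge D (D x y) y x h rfl
      have hx' := hbd x (by omega) (D x y)
      have hy' := hbd y (by omega) (D x y)
      have := congrFun hxy ⟨D x y, hj⟩
      simp only [he, Fin.mk.injEq] at this
      omega
    · have h : y < x := by omega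
      have hj : D y x < c := hc y x
      have h1 := pathLen_ge D (D y x) x y h rfl
      have hx' := hbd x (by omega) (D y x)
      have hy' := hbd y (by omega) (D y x)
      have := congrFun hxy ⟨D y x, hj⟩
      simp only [he, Fin.mk.injEq] at this
      omega
  have hcard := Finset.card_le_card_of_injOn e (fun x _ => Finset.mem_univ (e x)) hinj
  simp only [Finset.card_range, Finset.card_univ, Fintype.card_fun, Fintype.card_fin] at hcard
  omega

/-- The 2-dimensional weak Ramsey bound: a monochromatic increasing path with `m` edges
inside `[0, m^c]`. -/
lemma dim2 (D : ℕ → ℕ → ℕ) (c m : ℕ) (hc : ∀ x y, D x y < c) (hm : 1 ≤ m) :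
    ∃ g : ℕ → ℕ, (∀ t, t ≤ m → g t ≤ m ^ c) ∧ (∀ t, t + 1 ≤ m → g t < g (t + 1)) ∧
      ∃ j, ∀ t, t + 1 ≤ m → D (g t) (g (t + 1)) = j := by
  obtain ⟨x, hx, j, hj⟩ := exists_long_path D c m hc hm
  obtain ⟨g, hgm, hstep, hbd⟩ := pathLen_chain D j m x hj
  exact ⟨g, fun t ht => le_trans (hbd t ht) hx,
    fun t ht => (hstep t (by omega)).1, j, fun t ht => (hstep t (by omega)).2⟩



variable (c : ℕ) (C3 : ℕ → ℕ → ℕ → ℕ)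

/-- Code of `k` w.r.t. already-chosen elements `a 0, …, a i`. -/
def code (a : ℕ → ℕ) (i : ℕ) (k : ℕ) : Fin (i + 1) → Fin (i + 1) → Fin (c + 1) :=
  fun p q => ⟨min (C3 (a p) (a q) k) c, Nat.lt_succ_of_le (min_le_right _ _)⟩

/-- Elements of `S` above its min whose code matches the most frequent code. -/
noncomputable def nextS (a : ℕ → ℕ) (i : ℕ) (S : Finset ℕ) : Finset ℕ :=
  let S' := S.filter (fun k => WithTop.untopD 0 S.min < k)
  S'.filter (fun k => code c C3 a i k =
    Classical.choose (Finset.exists_max_image Finset.univ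
      (fun v => (S'.filter (fun k => code c C3 a i k = v)).card) Finset.univ_nonempty))

lemma nextS_subset (a : ℕ → ℕ) (i : ℕ) (S : Finset ℕ) : nextS c C3 a i S ⊆ S :=
  fun k hk => Finset.mem_filter.mp ((Finset.filter_subset _ _) hk) |>.1

lemma nextS_gt (a : ℕ → ℕ) (i : ℕ) (S : Finset ℕ) :
    ∀ k ∈ nextS c C3 a i S, WithTop.untopD 0 S.min < k :=
  fun k hk => (Finset.mem_filter.mp ((Finset.filter_subset _ _) hk)).2

lemma nextS_code_eq (a : ℕ → ℕ) (i : ℕ) (S : Finset ℕ) :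
    ∀ k ∈ nextS c C3 a i S, ∀ k' ∈ nextS c C3 a i S,
      code c C3 a i k = code c C3 a i k' := by
  intro k hk k' hk'
  have h1 := (Finset.mem_filter.mp hk).2
  have h2 := (Finset.mem_filter.mp hk').2
  rw [h1, h2]

lemma nextS_card_ge (a : ℕ → ℕ) (i : ℕ) (S : Finset ℕ) (v : Fin (i+1) → Fin (i+1) → Fin (c+1)) :
    ((S.filter (fun k => WithTop.untopD 0 S.min < k)).filter (fun k => code c C3 a i k = v)).card
      ≤ (nextS c C3 a i S).card := by
  have hspec := Classical.choose_spec (Finset.exists_max_image Finset.univ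
      (fun w => ((S.filter (fun k => WithTop.untopD 0 S.min < k)).filter
        (fun k => code c C3 a i k = w)).card) Finset.univ_nonempty)
  exact hspec.2 v (Finset.mem_univ v)

/-- The iterated construction: `(stage i).1` records chosen elements (indices `< i`),
`(stage i).2` is the current candidate set. -/
noncomputable def stage (R : ℕ) : ℕ → (ℕ → ℕ) × Finset ℕ
  | 0 => (fun _ => 0, Finset.range (R + 1))
  | i + 1 =>
      let p := stage R i
      let a' := Function.update p.1 i (WithTop.untopD 0 p.2.min)
      (a', nextS c C3 a' i p.2)

/-- The constructed sequence. -/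
noncomputable def aseq (R i : ℕ) : ℕ := WithTop.untopD 0 (stage c C3 R i).2.min

lemma stage_fst (R : ℕ) : ∀ i j, j < i → (stage c C3 R i).1 j = aseq c C3 R j := by
  intro i
  induction i with
  | zero => omega
  | succ i ih =>
    intro j hj
    show (Function.update (stage c C3 R i).1 i (WithTop.untopD 0 (stage c C3 R i).2.min)) j = _
    rcases Nat.lt_or_ge j i with h | h
    · rw [Function.update_of_ne (by omega), ih j h]
    · have : j = i := by omega
      subst this
      rw [Function.update_self]
      rfl

lemma min_mem_of_nonempty (S : Finset ℕ) (h : S.Nonempty) :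
    WithTop.untopD 0 S.min ∈ S ∧ ∀ k ∈ S, WithTop.untopD 0 S.min ≤ k := by
  have h1 : WithTop.untopD 0 S.min = S.min' h := by
    rw [← Finset.coe_min' h, WithTop.untopD_coe]
  rw [h1]
  exact ⟨Finset.min'_mem S h, fun k hk => Finset.min'_le S k hk⟩



variable (c : ℕ) (C3 : ℕ → ℕ → ℕ → ℕ)

lemma stage_succ (R i : ℕ) : (stage c C3 R (i + 1)).2 =
    nextS c C3 (Function.update (stage c C3 R i).1 i (aseq c C3 R i)) i (stage c C3 R i).2 := rfl

lemma stage_subset_succ (R i : ℕ) : (stage c C3 R (i + 1)).2 ⊆ (stage c C3 R i).2 := by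
  rw [stage_succ]; exact nextS_subset _ _ _ _ _

lemma stage_subset (R : ℕ) : ∀ q r, q ≤ r → (stage c C3 R r).2 ⊆ (stage c C3 R q).2 := by
  intro q r hqr
  induction r with
  | zero => have : q = 0 := by omega
            subst this; exact subset_rfl
  | succ r ih =>
    rcases Nat.lt_or_ge q (r+1) with h | h
    · exact (stage_subset_succ c C3 R r).trans (ih (by omega))
    · have : q = r + 1 := by omega
      subst this; exact subset_rfl

lemma stage_gt (R i : ℕ) : ∀ k ∈ (stage c C3 R (i + 1)).2, aseq c C3 R i < k := by
  rw [stage_succ]; exact nextS_gt _ _ _ _ _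

/-- A function recording the chosen elements up to and including index `i`. -/
lemma update_eq_aseq (R i : ℕ) : ∀ j ≤ i,
    (Function.update (stage c C3 R i).1 i (aseq c C3 R i)) j = aseq c C3 R j := by
  intro j hj
  rcases Nat.lt_or_ge j i with h | h
  · rw [Function.update_of_ne (by omega)]
    exact stage_fst c C3 R i j h
  · have : j = i := by omega
    subst this; rw [Function.update_self]

lemma stage_homog (R i : ℕ) (hC3 : ∀ x y z, C3 x y z < c) :
    ∀ p q, p ≤ i → q ≤ i → ∀ k ∈ (stage c C3 R (i+1)).2, ∀ k' ∈ (stage c C3 R (i+1)).2,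
      C3 (aseq c C3 R p) (aseq c C3 R q) k = C3 (aseq c C3 R p) (aseq c C3 R q) k' := by
  intro p q hp hq k hk k' hk'
  rw [stage_succ] at hk hk'
  have hcode := nextS_code_eq c C3 _ i _ k hk k' hk'
  have h1 := congrFun (congrFun hcode ⟨p, by omega⟩) ⟨q, by omega⟩
  simp only [code, Fin.mk.injEq] at h1
  have hap := update_eq_aseq c C3 R i p hp
  have haq := update_eq_aseq c C3 R i q hq
  rw [hap, haq] at h1
  have b1 := hC3 (aseq c C3 R p) (aseq c C3 R q) k
  have b2 := hC3 (aseq c C3 R p) (aseq c C3 R q) k'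
  rw [min_eq_left (by omega), min_eq_left (by omega)] at h1
  exact h1

lemma card_step (R N K i : ℕ) (hK : K = 2 ^ (N ^ 3) + 1)
    (hbound : (c + 1) ^ ((i + 1) * (i + 1)) ≤ 2 ^ (N ^ 3))
    (hi : i < N) (hcard : K ^ (N - i) ≤ (stage c C3 R i).2.card) :
    K ^ (N - (i + 1)) ≤ (stage c C3 R (i + 1)).2.card := by
  set S := (stage c C3 R i).2 with hS
  set a' := Function.update (stage c C3 R i).1 i (aseq c C3 R i) with ha'
  have hKpos : 1 ≤ K := by omega
  have hSne : S.Nonempty := by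
    refine Finset.card_pos.mp ?_
    have : 1 ≤ K ^ (N - i) := Nat.one_le_pow _ _ (by omega)
    omega
  obtain ⟨hmem, hmin⟩ := min_mem_of_nonempty S hSne
  set x := WithTop.untopD 0 S.min with hx
  set S' := S.filter (fun k => x < k) with hS'
  have hS'card : S'.card = S.card - 1 := by
    have : S' = S.erase x := by
      ext k
      simp only [hS', Finset.mem_filter, Finset.mem_erase]
      constructor
      · rintro ⟨h1, h2⟩; exact ⟨by omega, h1⟩
      · rintro ⟨h1, h2⟩
        exact ⟨h2, lt_of_le_of_ne (hmin k h2) (Ne.symm h1)⟩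
    rw [this, Finset.card_erase_of_mem hmem]
  have hT : (Finset.univ : Finset (Fin (i+1) → Fin (i+1) → Fin (c+1))).card
      = (c + 1) ^ ((i + 1) * (i + 1)) := by
    simp [Fintype.card_fun, ← pow_mul]
  have hexp : N - i = (N - (i + 1)) + 1 := by omega
  have hmul : (Finset.univ : Finset (Fin (i+1) → Fin (i+1) → Fin (c+1))).card
      * K ^ (N - (i + 1)) ≤ S'.card := by
    rw [hT, hS'card]
    have h1 : 1 ≤ K ^ (N - (i + 1)) := Nat.one_le_pow _ _ (by omega)
    have h2 : K ^ (N - i) = K * K ^ (N - (i + 1)) := by rw [hexp, pow_succ]; ring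
    have h5 : (c + 1) ^ ((i + 1) * (i + 1)) * K ^ (N - (i + 1)) + K ^ (N - (i + 1))
        ≤ K * K ^ (N - (i + 1)) := by
      have hTK : (c + 1) ^ ((i + 1) * (i + 1)) + 1 ≤ K := by omega
      calc (c + 1) ^ ((i + 1) * (i + 1)) * K ^ (N - (i + 1)) + K ^ (N - (i + 1))
          = ((c + 1) ^ ((i + 1) * (i + 1)) + 1) * K ^ (N - (i + 1)) := by ring
        _ ≤ K * K ^ (N - (i + 1)) := Nat.mul_le_mul_right _ hTK
    omega
  obtain ⟨w, _, hw⟩ := Finset.exists_le_card_fiber_of_mul_le_card_of_maps_to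
    (f := fun k => code c C3 a' i k) (fun k _ => Finset.mem_univ _)
    Finset.univ_nonempty hmul
  calc K ^ (N - (i + 1)) ≤ (S'.filter (fun k => code c C3 a' i k = w)).card := hw
    _ ≤ (stage c C3 R (i+1)).2.card := by
        rw [stage_succ]
        exact nextS_card_ge c C3 a' i S w

lemma card_all (R N K : ℕ) (hK : K = 2 ^ (N ^ 3) + 1)
    (hbound : ∀ i, i < N → (c + 1) ^ ((i + 1) * (i + 1)) ≤ 2 ^ (N ^ 3))
    (hR : K ^ N ≤ R + 1) :
    ∀ i, i ≤ N → K ^ (N - i) ≤ (stage c C3 R i).2.card := by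
  intro i
  induction i with
  | zero => intro _; simpa [stage] using hR
  | succ i ih =>
    intro hi
    exact card_step c C3 R N K i hK (hbound i (by omega)) (by omega) (ih (by omega))



variable (c : ℕ) (C3 : ℕ → ℕ → ℕ → ℕ)

lemma master (hC3 : ∀ x y z, C3 x y z < c) (R N K : ℕ) (hK : K = 2 ^ (N ^ 3) + 1)
    (hbound : ∀ i, i < N → (c + 1) ^ ((i + 1) * (i + 1)) ≤ 2 ^ (N ^ 3))
    (hR : K ^ N ≤ R + 1) :
    (∀ i, i ≤ N → aseq c C3 R i ≤ R) ∧
    (∀ i j, i < j → j ≤ N → aseq c C3 R i < aseq c C3 R j) ∧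
    (∀ p q r r', p < q → q < r → r ≤ N → q < r' → r' ≤ N →
      C3 (aseq c C3 R p) (aseq c C3 R q) (aseq c C3 R r)
        = C3 (aseq c C3 R p) (aseq c C3 R q) (aseq c C3 R r')) := by
  have hcard := card_all c C3 R N K hK hbound hR
  have hK1 : 0 < K := by rw [hK]; positivity
  have hne : ∀ i, i ≤ N → (stage c C3 R i).2.Nonempty := by
    intro i hi
    refine Finset.card_pos.mp ?_
    have h1 := hcard i hi
    have h2 : 1 ≤ K ^ (N - i) := Nat.one_le_pow _ _ hK1
    omega
  have hmem : ∀ i, i ≤ N → aseq c C3 R i ∈ (stage c C3 R i).2 := by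
    intro i hi
    exact (min_mem_of_nonempty _ (hne i hi)).1
  have hlt : ∀ i j, i < j → j ≤ N → aseq c C3 R i < aseq c C3 R j := by
    intro i j hij hj
    have h1 : aseq c C3 R j ∈ (stage c C3 R (i + 1)).2 :=
      stage_subset c C3 R (i + 1) j (by omega) (hmem j hj)
    exact stage_gt c C3 R i _ h1
  refine ⟨?_, hlt, ?_⟩
  · intro i hi
    have h1 : aseq c C3 R i ∈ (stage c C3 R 0).2 :=
      stage_subset c C3 R 0 i (by omega) (hmem i hi)
    have : (stage c C3 R 0).2 = Finset.range (R + 1) := rfl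
    rw [this, Finset.mem_range] at h1
    omega
  · intro p q r r' hpq hqr hr hqr' hr'
    have h1 : aseq c C3 R r ∈ (stage c C3 R (q + 1)).2 :=
      stage_subset c C3 R (q + 1) r (by omega) (hmem r hr)
    have h2 : aseq c C3 R r' ∈ (stage c C3 R (q + 1)).2 :=
      stage_subset c C3 R (q + 1) r' (by omega) (hmem r' hr')
    exact stage_homog c C3 R q hC3 p q (by omega) le_rfl _ h1 _ h2



end WR3

open WR3 in
/-- `wr_c^3(m) ≤ 2^(m^(6c))` for `m ≥ 1`: every coloring of increasing triples from
`[0, 2^(m^(6c))]` in `c` colors admits a weakly homogeneous set of size `m + 1`. -/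
theorem wr_three_upper_bound (c m : ℕ) (hm : 1 ≤ m) :
    ∀ C : (Fin 3 → ℕ) → ℕ, (∀ x, C x < c) →
      ∃ h : ℕ → ℕ, (∀ i, i < m + 1 → h i ≤ 2 ^ m ^ (6 * c)) ∧ WHCd 3 C (m + 1) h := by
  intro C hCc
  -- trivial cases
  rcases Nat.eq_zero_or_pos c with hc0 | hcpos
  · exact absurd (hCc fun _ => 0) (by omega)
  rcases Nat.lt_or_ge m 2 with hm1 | hm2
  · -- m = 1
    have hm' : m = 1 := by omega
    subst hm'
    refine ⟨id, ?_, ?_, ?_⟩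
    · intro i hi
      simp only [id_eq, one_pow, pow_one]
      omega
    · intro i hi; simp only [id_eq]; omega
    · intro i hi; omega
  rcases Nat.lt_or_ge c 2 with hc1 | hc2
  · -- c = 1 : the coloring is constant
    have hc' : c = 1 := by omega
    subst hc'
    refine ⟨id, ?_, ?_, ?_⟩
    · intro i hi
      have h1 : m < 2 ^ m := Nat.lt_two_pow_self (n := m)
      have h2 : 2 ^ m ≤ 2 ^ m ^ (6 * 1) := by
        refine Nat.pow_le_pow_right (by omega) ?_
        calc m = m ^ 1 := (pow_one m).symm
          _ ≤ m ^ (6 * 1) := Nat.pow_le_pow_right (by omega) (by omega)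
      simp only [id_eq]
      omega
    · intro i hi; simp only [id_eq]; omega
    · intro i hi
      have h1 := hCc (fun t => (id : ℕ → ℕ) (i + t))
      have h2 := hCc (fun t => (id : ℕ → ℕ) (i + 1 + t))
      omega
  -- main case : c ≥ 2, m ≥ 2
  set C3 : ℕ → ℕ → ℕ → ℕ := fun x y z => C ![x, y, z] with hC3def
  have hC3 : ∀ x y z, C3 x y z < c := fun x y z => hCc _
  set n : ℕ := m ^ c with hn
  have hn4 : 4 ≤ n := by
    calc (4 : ℕ) = 2 ^ 2 := rfl
      _ ≤ m ^ c := Nat.pow_le_pow_left hm2 2 |>.trans (Nat.pow_le_pow_right (by omega) hc2)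
  set N : ℕ := n + 1 with hN
  set K : ℕ := 2 ^ (N ^ 3) + 1 with hK
  set R : ℕ := 2 ^ m ^ (6 * c) with hR
  have hmc6 : m ^ (6 * c) = n ^ 6 := by
    rw [hn, ← pow_mul]
    ring_nf
  have hbound : ∀ i, i < N → (c + 1) ^ ((i + 1) * (i + 1)) ≤ 2 ^ (N ^ 3) := by
    intro i hi
    have hcN : c + 1 ≤ N := by
      have h1 : c < 2 ^ c := Nat.lt_two_pow_self (n := c)
      have h2 : 2 ^ c ≤ m ^ c := Nat.pow_le_pow_left hm2 c
      omega
    calc (c + 1) ^ ((i + 1) * (i + 1)) ≤ N ^ ((i + 1) * (i + 1)) :=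
          Nat.pow_le_pow_left hcN _
      _ ≤ N ^ (N * N) := Nat.pow_le_pow_right (by omega) (Nat.mul_le_mul (by omega) (by omega))
      _ ≤ (2 ^ N) ^ (N * N) := Nat.pow_le_pow_left (le_of_lt (Nat.lt_two_pow_self (n := N))) _
      _ = 2 ^ (N ^ 3) := by rw [← pow_mul]; ring_nf
  have hRK : K ^ N ≤ R + 1 := by
    have h1 : K ≤ 2 ^ (N ^ 3 + 1) := by
      rw [pow_succ]
      have : 1 ≤ 2 ^ (N ^ 3) := Nat.one_le_pow _ _ (by omega)
      omega
    have h2 : K ^ N ≤ (2 ^ (N ^ 3 + 1)) ^ N := Nat.pow_le_pow_left h1 N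
    have h3 : (2 ^ (N ^ 3 + 1)) ^ N = 2 ^ ((N ^ 3 + 1) * N) := by rw [← pow_mul]
    have h4 : (N ^ 3 + 1) * N ≤ n ^ 6 := by
      rw [hN]
      nlinarith [hn4, Nat.mul_le_mul_right n hn4, Nat.mul_le_mul_right (n ^ 2) hn4,
        Nat.mul_le_mul_right (n ^ 3) hn4, Nat.mul_le_mul_right (n ^ 4) hn4,
        Nat.mul_le_mul_right (n ^ 5) hn4]
    have h5 : 2 ^ ((N ^ 3 + 1) * N) ≤ 2 ^ (n ^ 6) := Nat.pow_le_pow_right (by omega) h4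
    have h6 : (2 : ℕ) ^ n ^ 6 = R := by rw [hR, hmc6]
    omega
  obtain ⟨hbd, hmono, hhom⟩ := master c C3 hC3 R N K rfl hbound hRK
  set a : ℕ → ℕ := aseq c C3 R with ha
  set D : ℕ → ℕ → ℕ := fun p q => C3 (a p) (a q) (a (q + 1)) with hD
  have hDc : ∀ x y, D x y < c := fun x y => hC3 _ _ _
  obtain ⟨g, hgbd, hginc, j, hgcol⟩ := dim2 D c m hDc (by omega)
  refine ⟨fun t => a (g t), ?_, ?_, ?_⟩
  · intro i hi
    exact hbd (g i) (by have := hgbd i (by omega); omega)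
  · intro i hi
    exact hmono (g i) (g (i + 1)) (hginc i (by omega))
      (by have := hgbd (i + 1) (by omega); omega)
  · intro i hi
    have e0 : (fun t : Fin 3 => a (g (i + ↑t))) = ![a (g i), a (g (i + 1)), a (g (i + 2))] := by
      funext t; fin_cases t <;> rfl
    have e0' : (fun t : Fin 3 => a (g (i + 1 + ↑t)))
        = ![a (g (i + 1)), a (g (i + 1 + 1)), a (g (i + 1 + 2))] := by
      funext t; fin_cases t <;> rfl
    show C (fun t : Fin 3 => a (g (i + ↑t))) = C (fun t : Fin 3 => a (g (i + 1 + ↑t)))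
    rw [e0, e0']
    have e1 : C ![a (g i), a (g (i + 1)), a (g (i + 2))] = D (g i) (g (i + 1)) := by
      rw [hD]
      exact hhom (g i) (g (i + 1)) (g (i + 2)) (g (i + 1) + 1)
        (hginc i (by omega)) (hginc (i + 1) (by omega))
        (by have := hgbd (i + 2) (by omega); omega) (by omega)
        (by have := hgbd (i + 1) (by omega); omega)
    have e2 : C ![a (g (i + 1)), a (g (i + 2)), a (g (i + 3))] = D (g (i + 1)) (g (i + 2)) := by
      rw [hD]
      exact hhom (g (i + 1)) (g (i + 2)) (g (i + 3)) (g (i + 2) + 1)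
        (hginc (i + 1) (by omega)) (hginc (i + 2) (by omega))
        (by have := hgbd (i + 3) (by omega); omega) (by omega)
        (by have := hgbd (i + 2) (by omega); omega)
    have e3 : D (g i) (g (i + 1)) = j := hgcol i (by omega)
    have e4 : D (g (i + 1)) (g (i + 2)) = j := hgcol (i + 1) (by omega)
    calc C ![a (g i), a (g (i + 1)), a (g (i + 2))] = j := by rw [e1, e3]
      _ = C ![a (g (i + 1)), a (g (i + 1 + 1)), a (g (i + 1 + 2))] := by
          rw [show i + 1 + 1 = i + 2 by ring, show i + 1 + 2 = i + 3 by ring, e2, e4]
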